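/- Let h : SL(2,ℝ) → ℂ be continuous, compactly supported and bi-SO(2)-invariant (h(k₁ g k₂) = h(g) for all k₁, k₂ ∈ SO(2) and g ∈ SL(2,ℝ)), and let s ∈ ℂ with Re s > 1. Then there exists a complex number ĥ(s) such that ∫_{SL(2,ℝ)} h(x) · (Im((g·x)·i))^s dμ_G(x) = ĥ(s) · (Im(g·i))^s for every g ∈ SL(2,ℝ), and with this same ĥ(s) one has the eigenfunction property ∫_{SL(2,ℝ)} h(x) · E((g·x)·i; s) dμ_G(x) = ĥ(s) · E(g·i; s) for every g ∈ SL(2,ℝ). -/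

import Mathlib

open MeasureTheory
open scoped ENNReal NNReal

/-- The summand of the Eisenstein series: `(Im z)^s / |m z + n|^{2s}`. -/
noncomputable def eisTerm (s : ℂ) (z : ℂ) (p : ℤ × ℤ) : ℂ :=
  (z.im : ℂ) ^ s / ((‖(p.1 : ℂ) * z + (p.2 : ℂ)‖ : ℝ) : ℂ) ^ (2 * s)

/-- The Eisenstein series `E(z; s)`, summed over coprime pairs of integers. -/
noncomputable def eis (s : ℂ) (z : ℂ) : ℂ :=
  ∑' p : {p : ℤ × ℤ // Int.gcd p.1 p.2 = 1}, eisTerm s z (p : ℤ × ℤ)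

/-- The Möbius action of a real `2 × 2` matrix on a point of the complex plane. -/
noncomputable def moebiusM (m : Matrix (Fin 2) (Fin 2) ℝ) (z : ℂ) : ℂ :=
  ((m 0 0 : ℂ) * z + (m 0 1 : ℂ)) / ((m 1 0 : ℂ) * z + (m 1 1 : ℂ))

/-- `SL(2, ℝ)` carries the subspace topology from the space of matrices. -/
noncomputable instance : TopologicalSpace (Matrix.SpecialLinearGroup (Fin 2) ℝ) :=
  inferInstanceAs (TopologicalSpace {A : Matrix (Fin 2) (Fin 2) ℝ // A.det = 1})

/-- `SO(2)`: the stabilizer of `i ∈ ℍ` in `SL(2, ℝ)`. -/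
def SO2 : Set (Matrix.SpecialLinearGroup (Fin 2) ℝ) :=
  {k | moebiusM (k : Matrix (Fin 2) (Fin 2) ℝ) Complex.I = Complex.I}

/-! ### Auxiliary lemmas -/

open Complex

section Moebius

lemma denom_ne_zero' {c d : ℝ} (hcd : ¬(c = 0 ∧ d = 0)) {z : ℂ} (hz : 0 < z.im) :
    (c : ℂ) * z + d ≠ 0 := by
  intro h
  rcases eq_or_ne c 0 with hc | hc
  · subst hc
    simp only [Complex.ofReal_zero, zero_mul, zero_add, Complex.ofReal_eq_zero] at h
    exact hcd ⟨rfl, h⟩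
  · have : ((c : ℂ) * z + d).im = c * z.im := by simp
    rw [h] at this
    simp only [Complex.zero_im] at this
    exact (mul_ne_zero hc hz.ne') this.symm

lemma denom_ne_zero {A : Matrix (Fin 2) (Fin 2) ℝ} (hA : A.det = 1) {z : ℂ} (hz : 0 < z.im) :
    (A 1 0 : ℂ) * z + A 1 1 ≠ 0 := by
  refine denom_ne_zero' (fun ⟨h1, h2⟩ => ?_) hz
  rw [Matrix.det_fin_two, h1, h2] at hA
  simp at hA

lemma im_moebius {A : Matrix (Fin 2) (Fin 2) ℝ} (hA : A.det = 1) {z : ℂ} (hz : 0 < z.im) :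
    (moebiusM A z).im = z.im / Complex.normSq ((A 1 0 : ℂ) * z + A 1 1) := by
  rw [Matrix.det_fin_two] at hA
  simp only [moebiusM]
  rw [Complex.div_im]
  simp only [Complex.add_im, Complex.add_re, Complex.mul_im, Complex.mul_re,
    Complex.ofReal_re, Complex.ofReal_im]
  rw [div_sub_div_same]
  congr 1
  ring_nf
  linear_combination z.im * hA

lemma im_moebius_pos {A : Matrix (Fin 2) (Fin 2) ℝ} (hA : A.det = 1) {z : ℂ} (hz : 0 < z.im) :
    0 < (moebiusM A z).im := by
  rw [im_moebius hA hz]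
  have h2 : 0 < Complex.normSq ((A 1 0 : ℂ) * z + A 1 1) := by
    rw [Complex.normSq_pos]; exact denom_ne_zero hA hz
  positivity

lemma moebius_one (z : ℂ) : moebiusM 1 z = z := by
  simp [moebiusM, Matrix.one_apply]

lemma moebius_mul {A B : Matrix (Fin 2) (Fin 2) ℝ} (hA : A.det = 1) (hB : B.det = 1)
    {z : ℂ} (hz : 0 < z.im) : moebiusM (A * B) z = moebiusM A (moebiusM B z) := by
  have hd1 : (B 1 0 : ℂ) * z + B 1 1 ≠ 0 := denom_ne_zero hB hz
  have hd2 : (A 1 0 : ℂ) * (moebiusM B z) + A 1 1 ≠ 0 :=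
    denom_ne_zero hA (im_moebius_pos hB hz)
  have hd3 : ((A * B) 1 0 : ℂ) * z + (A * B) 1 1 ≠ 0 :=
    denom_ne_zero (by rw [Matrix.det_mul, hA, hB, mul_one]) hz
  simp only [moebiusM] at hd2 hd3 ⊢
  simp only [Matrix.mul_apply, Fin.sum_univ_two] at hd3 ⊢
  push_cast at hd3 ⊢
  rw [div_eq_div_iff hd3 hd2]
  field_simp
  ring

end Moebius

section Topology

local notation "SL2" => Matrix.SpecialLinearGroup (Fin 2) ℝ

lemma contCoe : Continuous (fun g : SL2 => (g : Matrix (Fin 2) (Fin 2) ℝ)) :=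
  continuous_subtype_val

instance : ContinuousMul SL2 := by
  constructor
  apply continuous_induced_rng.2
  exact (contCoe.comp continuous_fst).matrix_mul (contCoe.comp continuous_snd)

lemma contEntry (i j : Fin 2) : Continuous fun g : SL2 => ((g : Matrix (Fin 2) (Fin 2) ℝ) i j) := by
  have : Continuous fun m : Matrix (Fin 2) (Fin 2) ℝ => m i j :=
    (continuous_apply j).comp (continuous_apply i)
  exact this.comp contCoe

lemma I_im_pos : (0:ℝ) < Complex.I.im := by simp

lemma imI_pos (g : SL2) : 0 < (moebiusM (g : Matrix (Fin 2) (Fin 2) ℝ) Complex.I).im :=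
  im_moebius_pos g.2 I_im_pos

lemma contMoebiusI :
    Continuous fun g : SL2 => moebiusM (g : Matrix (Fin 2) (Fin 2) ℝ) Complex.I := by
  apply Continuous.div
  · exact ((continuous_ofReal.comp (contEntry 0 0)).mul continuous_const).add
      (continuous_ofReal.comp (contEntry 0 1))
  · exact ((continuous_ofReal.comp (contEntry 1 0)).mul continuous_const).add
      (continuous_ofReal.comp (contEntry 1 1))
  · exact fun g => denom_ne_zero g.2 I_im_pos

end Topology

section SO2facts

local notation "SL2" => Matrix.SpecialLinearGroup (Fin 2) ℝ

lemma one_mem_SO2 : (1 : SL2) ∈ SO2 := by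
  show moebiusM ((1 : SL2) : Matrix (Fin 2) (Fin 2) ℝ) Complex.I = Complex.I
  rw [Matrix.SpecialLinearGroup.coe_one, moebius_one]

lemma inv_mem_SO2 {k : SL2} (hk : k ∈ SO2) : k⁻¹ ∈ SO2 := by
  have h1 : moebiusM ((k⁻¹ * k : SL2) : Matrix (Fin 2) (Fin 2) ℝ) Complex.I = Complex.I := by
    rw [inv_mul_cancel, Matrix.SpecialLinearGroup.coe_one, moebius_one]
  rw [Matrix.SpecialLinearGroup.coe_mul, moebius_mul (k⁻¹).2 k.2 I_im_pos, hk] at h1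
  exact h1

end SO2facts

section Key

local notation "SL2" => Matrix.SpecialLinearGroup (Fin 2) ℝ

/-- The function `ys s g = (Im (g·i))^s`. -/
noncomputable def ys (s : ℂ) (g : SL2) : ℂ :=
  ((moebiusM (g : Matrix (Fin 2) (Fin 2) ℝ) Complex.I).im : ℂ) ^ s

/-- The key spherical identity: the power function `ys` is an eigenfunction of
convolution with any left-`SO(2)`-invariant function. -/
lemma key_lemma [MeasurableSpace SL2] [BorelSpace SL2]
    (μG : Measure SL2) [μG.IsHaarMeasure]
    (h : SL2 → ℂ)
    (hbi : ∀ k₁ ∈ SO2, ∀ k₂ ∈ SO2, ∀ g, h (k₁ * g * k₂) = h g)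
    (s : ℂ) (g : SL2) :
    ∫ x, h x * ys s (g * x) ∂μG = (∫ x, h x * ys s x ∂μG) * ys s g := by
  set z := moebiusM (g : Matrix (Fin 2) (Fin 2) ℝ) Complex.I with hzdef
  have hz : 0 < z.im := imI_pos g
  set a := Real.sqrt z.im with hadef
  have ha : 0 < a := Real.sqrt_pos.2 hz
  have ha2 : a ^ 2 = z.im := Real.sq_sqrt hz.le
  set pmat : Matrix (Fin 2) (Fin 2) ℝ := !![a, z.re / a; 0, a⁻¹] with hpmat
  have hpdet : pmat.det = 1 := by
    rw [hpmat, Matrix.det_fin_two_of]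
    field_simp
    ring
  set p : SL2 := ⟨pmat, hpdet⟩ with hp
  have hpcoe : (p : Matrix (Fin 2) (Fin 2) ℝ) = pmat := rfl
  -- p · i = z
  have hpI : moebiusM pmat Complex.I = z := by
    simp only [moebiusM, hpmat, Matrix.cons_val', Matrix.cons_val_zero, Matrix.empty_val',
      Matrix.cons_val_fin_one, Matrix.cons_val_one, Matrix.head_cons, Matrix.head_fin_const,
      Matrix.of_apply]
    rw [ofReal_zero, zero_mul, zero_add, ofReal_inv, div_eq_mul_inv, inv_inv]
    apply Complex.ext
    · simp [ha.ne']
    · simp only [add_im, mul_im, ofReal_re, I_im, ofReal_im, I_re, add_re, mul_re, add_mul]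
      ring_nf
      simpa using ha2
  -- the action of p on any point scales Im by z.im
  have hpim : ∀ w : ℂ, (moebiusM pmat w).im = z.im * w.im := by
    intro w
    simp only [moebiusM, hpmat, Matrix.cons_val', Matrix.cons_val_zero, Matrix.empty_val',
      Matrix.cons_val_fin_one, Matrix.cons_val_one, Matrix.head_cons, Matrix.head_fin_const,
      Matrix.of_apply]
    rw [ofReal_zero, zero_mul, zero_add, ofReal_inv, div_eq_mul_inv, inv_inv]
    simp only [add_mul, mul_im, ofReal_re, ofReal_im, add_im, add_re, mul_re]
    linear_combination w.im * ha2
  set k : SL2 := p⁻¹ * g with hkdef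
  have hk : k ∈ SO2 := by
    show moebiusM ((k : SL2) : Matrix (Fin 2) (Fin 2) ℝ) Complex.I = Complex.I
    rw [hkdef, Matrix.SpecialLinearGroup.coe_mul, moebius_mul (p⁻¹).2 g.2 I_im_pos, ← hzdef,
      ← hpI, ← hpcoe, ← moebius_mul (p⁻¹).2 p.2 I_im_pos, ← Matrix.SpecialLinearGroup.coe_mul,
      inv_mul_cancel, Matrix.SpecialLinearGroup.coe_one, moebius_one]
  have hgpk : ∀ x : SL2, g * x = p * (k * x) := by
    intro x
    rw [hkdef, ← mul_assoc, mul_inv_cancel_left]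
  -- step 1 : translate by k
  have step1 : ∫ x, h x * ys s (g * x) ∂μG = ∫ x, h (k⁻¹ * x) * ys s (p * x) ∂μG := by
    have := integral_mul_left_eq_self (μ := μG) (fun x => h (k⁻¹ * x) * ys s (p * x)) k
    rw [← this]
    congr 1
    funext x
    rw [inv_mul_cancel_left, hgpk x, ← mul_assoc]
  -- step 2 : left invariance of h
  have step2 : ∀ x : SL2, h (k⁻¹ * x) = h x := by
    intro x
    have := hbi k⁻¹ (inv_mem_SO2 hk) 1 one_mem_SO2 x
    rwa [mul_one] at this
  -- step 3 : scaling
  have step3 : ∀ x : SL2, ys s (p * x) = (z.im : ℂ) ^ s * ys s x := by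
    intro x
    have him : 0 < (moebiusM (x : Matrix (Fin 2) (Fin 2) ℝ) Complex.I).im := imI_pos x
    simp only [ys]
    rw [Matrix.SpecialLinearGroup.coe_mul, hpcoe, moebius_mul hpdet x.2 I_im_pos, hpim]
    rw [← Complex.mul_cpow_ofReal_nonneg hz.le him.le, ofReal_mul]
  calc ∫ x, h x * ys s (g * x) ∂μG
      = ∫ x, h x * ys s (p * x) ∂μG := by
        rw [step1]; congr 1; funext x; rw [step2]
    _ = ∫ x, (z.im : ℂ) ^ s * (h x * ys s x) ∂μG := by
        congr 1; funext x; rw [step3]; ring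
    _ = (z.im : ℂ) ^ s * ∫ x, h x * ys s x ∂μG := integral_const_mul _ _
    _ = (∫ x, h x * ys s x ∂μG) * ys s g := by
        rw [mul_comm]
        simp only [ys]
        rfl

end Key

section EisTerm

local notation "SL2" => Matrix.SpecialLinearGroup (Fin 2) ℝ

lemma int_denom_ne_zero {m n : ℤ} (hmn : Int.gcd m n = 1) {w : ℂ} (hw : 0 < w.im) :
    (m : ℂ) * w + (n : ℂ) ≠ 0 := by
  have h := denom_ne_zero' (c := (m : ℝ)) (d := (n : ℝ)) ?_ hw
  · push_cast at h ⊢; exact h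
  · rintro ⟨h1, h2⟩
    rw [Int.cast_eq_zero] at h1 h2
    rw [h1, h2] at hmn
    simp at hmn

/-- Positive real cpow algebra : `(t/u²)^s = t^s / u^(2s)`. -/
lemma cpow_div_sq {t u : ℝ} (ht : 0 < t) (hu : 0 < u) (s : ℂ) :
    ((t / u ^ 2 : ℝ) : ℂ) ^ s = (t : ℂ) ^ s / (u : ℂ) ^ (2 * s) := by
  have hu2 : (0:ℝ) < u ^ 2 := by positivity
  have h2 : ((u : ℂ)) ^ (2 * s) = ((u ^ 2 : ℝ) : ℂ) ^ s := by
    have hlog : (Complex.log (u : ℂ) * 2).im = 0 := by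
      simp [Complex.log_im, Complex.arg_ofReal_of_nonneg hu.le]
    rw [Complex.cpow_mul _ (by rw [hlog]; exact neg_neg_iff_pos.2 Real.pi_pos)
      (by rw [hlog]; exact Real.pi_pos.le)]
    congr 1
    rw [show (2 : ℂ) = ((2 : ℕ) : ℂ) by norm_num, Complex.cpow_natCast]
    push_cast; ring
  have h3 : (t : ℂ) ^ s = ((t / u ^ 2 : ℝ) : ℂ) ^ s * ((u ^ 2 : ℝ) : ℂ) ^ s := by
    rw [← Complex.mul_cpow_ofReal_nonneg (by positivity) hu2.le]
    congr 1
    rw [← Complex.ofReal_mul, div_mul_cancel₀ _ (ne_of_gt hu2)]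
  have hne : ((u ^ 2 : ℝ) : ℂ) ^ s ≠ 0 := by
    intro hc
    rw [Complex.cpow_eq_zero_iff] at hc
    have : (u ^ 2 : ℝ) = 0 := by exact_mod_cast hc.1
    exact hu2.ne' this
  rw [h2, h3, mul_div_cancel_right₀ _ hne]

/-- Every coprime-pair Eisenstein summand is a translate of the power function. -/
lemma eisTerm_eq_ys {m n : ℤ} (hmn : Int.gcd m n = 1) (s : ℂ) :
    ∃ γ : SL2, ∀ w : ℂ, 0 < w.im →
      eisTerm s w (m, n) = ((moebiusM (γ : Matrix (Fin 2) (Fin 2) ℝ) w).im : ℂ) ^ s := by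
  obtain ⟨u, v, huv⟩ := Int.isCoprime_iff_gcd_eq_one.2 hmn
  set γmat : Matrix (Fin 2) (Fin 2) ℝ := !![(v : ℝ), (-u : ℝ); (m : ℝ), (n : ℝ)] with hγ
  have hdet : γmat.det = 1 := by
    rw [hγ, Matrix.det_fin_two_of]
    have : ((u * m + v * n : ℤ) : ℝ) = 1 := by rw [huv]; norm_num
    push_cast at this ⊢
    linarith
  refine ⟨⟨γmat, hdet⟩, fun w hw => ?_⟩
  have hD : ((m : ℂ)) * w + (n : ℂ) ≠ 0 := int_denom_ne_zero hmn hw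
  have hu : 0 < ‖(m : ℂ) * w + (n : ℂ)‖ := by
    simpa [AbsoluteValue.pos_iff] using hD
  have him : (moebiusM γmat w).im = w.im / ‖(m : ℂ) * w + (n : ℂ)‖ ^ 2 := by
    rw [im_moebius hdet hw]
    congr 1
    rw [Complex.normSq_eq_norm_sq]
    congr 2 <;> simp [hγ]
  show eisTerm s w (m, n) = ((moebiusM γmat w).im : ℂ) ^ s
  rw [him, eisTerm]
  rw [cpow_div_sq hw hu s]

end EisTerm

/-! ### The main theorem -/

/-- Convolving the Eisenstein series (as a function on `SL(2,ℝ)` via `g ↦ E(g·i; s)`) with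
a bi-`SO(2)`-invariant test function `h` multiplies it by the "spherical transform"
`ĥ(s)`, characterized by the same eigenfunction equation for `g ↦ (Im (g·i))^s`. -/
theorem stmt_14
    [MeasurableSpace (Matrix.SpecialLinearGroup (Fin 2) ℝ)]
    [BorelSpace (Matrix.SpecialLinearGroup (Fin 2) ℝ)]
    (μG : Measure (Matrix.SpecialLinearGroup (Fin 2) ℝ)) [μG.IsHaarMeasure]
    (h : Matrix.SpecialLinearGroup (Fin 2) ℝ → ℂ)
    (hcont : Continuous h) (hsupp : HasCompactSupport h)
    (hbi : ∀ k₁ ∈ SO2, ∀ k₂ ∈ SO2, ∀ g, h (k₁ * g * k₂) = h g)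
    (s : ℂ) (hs : 1 < s.re) :
    ∃ hhat : ℂ,
      (∀ g : Matrix.SpecialLinearGroup (Fin 2) ℝ,
        (∫ x, h x *
            ((moebiusM ((g * x : Matrix.SpecialLinearGroup (Fin 2) ℝ) :
              Matrix (Fin 2) (Fin 2) ℝ) Complex.I).im : ℂ) ^ s ∂μG) =
          hhat * ((moebiusM (g : Matrix (Fin 2) (Fin 2) ℝ) Complex.I).im : ℂ) ^ s) ∧
      (∀ g : Matrix.SpecialLinearGroup (Fin 2) ℝ,
        (∫ x, h x *
            eis s (moebiusM ((g * x : Matrix.SpecialLinearGroup (Fin 2) ℝ) :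
              Matrix (Fin 2) (Fin 2) ℝ) Complex.I) ∂μG) =
          hhat * eis s (moebiusM (g : Matrix (Fin 2) (Fin 2) ℝ) Complex.I)) := by
  classical
  refine ⟨∫ x, h x * ys s x ∂μG, fun g => key_lemma μG h hbi s g, fun g => ?_⟩
  -- notation
  set hhat := ∫ x, h x * ys s x ∂μG with hhatdef
  set Φ : Matrix.SpecialLinearGroup (Fin 2) ℝ → ℂ :=
    fun x => moebiusM ((g * x : Matrix.SpecialLinearGroup (Fin 2) ℝ) :
      Matrix (Fin 2) (Fin 2) ℝ) Complex.I with hΦdef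
  have hΦcont : Continuous Φ := contMoebiusI.comp (continuous_mul_left g)
  have hΦim : ∀ x, 0 < (Φ x).im := fun x => imI_pos (g * x)
  -- the integral of each individual term
  have hterm_int : ∀ p : {p : ℤ × ℤ // Int.gcd p.1 p.2 = 1},
      ∫ x, h x * eisTerm s (Φ x) ↑p ∂μG =
        hhat * eisTerm s (moebiusM (g : Matrix (Fin 2) (Fin 2) ℝ) Complex.I) ↑p := by
    rintro ⟨⟨m, n⟩, hp⟩
    obtain ⟨γ, hγ⟩ := eisTerm_eq_ys hp s
    have h1 : ∀ x, eisTerm s (Φ x) (m, n) = ys s ((γ * g) * x) := by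
      intro x
      rw [hγ _ (hΦim x)]
      simp only [ys]
      rw [mul_assoc, Matrix.SpecialLinearGroup.coe_mul, moebius_mul γ.2 (g * x).2 I_im_pos]
    have h2 : eisTerm s (moebiusM (g : Matrix (Fin 2) (Fin 2) ℝ) Complex.I) (m, n) =
        ys s (γ * g) := by
      rw [hγ _ (imI_pos g)]
      simp only [ys]
      rw [Matrix.SpecialLinearGroup.coe_mul, moebius_mul γ.2 g.2 I_im_pos]
    calc ∫ x, h x * eisTerm s (Φ x) (m, n) ∂μG
        = ∫ x, h x * ys s ((γ * g) * x) ∂μG := by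
          congr 1; funext x; rw [h1 x]
      _ = hhat * ys s (γ * g) := key_lemma μG h hbi s (γ * g)
      _ = _ := by rw [h2]
  -- continuity of each term
  have htermcont : ∀ p : {p : ℤ × ℤ // Int.gcd p.1 p.2 = 1},
      Continuous fun x => h x * eisTerm s (Φ x) ↑p := by
    rintro ⟨⟨m, n⟩, hp⟩
    refine hcont.mul ?_
    simp only [eisTerm]
    have hb1 : Continuous fun x => ((Φ x).im : ℂ) :=
      continuous_ofReal.comp (Complex.continuous_im.comp hΦcont)
    have habs : Continuous fun x => ((‖(m : ℂ) * Φ x + (n : ℂ)‖ : ℝ) : ℂ) :=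
      continuous_ofReal.comp (continuous_norm.comp
        ((continuous_const.mul hΦcont).add continuous_const))
    have habspos : ∀ x, 0 < ‖(m : ℂ) * Φ x + (n : ℂ)‖ := fun x =>
      norm_pos_iff.mpr (int_denom_ne_zero hp (hΦim x))
    apply Continuous.div
    · exact hb1.cpow continuous_const
        (fun x => Complex.mem_slitPlane_iff.2 (Or.inl (by simpa using hΦim x)))
    · exact habs.cpow continuous_const
        (fun x => Complex.mem_slitPlane_iff.2 (Or.inl (by simpa using habspos x)))
    · intro x
      intro hc
      rw [Complex.cpow_eq_zero_iff] at hc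
      have : ‖(m : ℂ) * Φ x + (n : ℂ)‖ = 0 := by exact_mod_cast hc.1
      exact (habspos x).ne' this
  -- the uniform bound over the (compact) support
  set K : Set (Matrix.SpecialLinearGroup (Fin 2) ℝ) := tsupport h ∪ {1} with hKdef
  have hK : IsCompact K := hsupp.union isCompact_singleton
  set W : Set ℂ := Φ '' K with hWdef
  have hW : IsCompact W := hK.image hΦcont
  have hWne : W.Nonempty := ⟨Φ 1, Set.mem_image_of_mem _ (Or.inr rfl)⟩
  have hWim : ∀ w ∈ W, 0 < w.im := by
    rintro w ⟨x, -, rfl⟩; exact hΦim x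
  obtain ⟨A, hA⟩ := hW.exists_bound_of_continuousOn Complex.continuous_re.continuousOn
  obtain ⟨w0, hw0W, hw0min⟩ := hW.exists_isMinOn hWne Complex.continuous_im.continuousOn
  obtain ⟨w1, hw1W, hw1max⟩ := hW.exists_isMaxOn hWne Complex.continuous_im.continuousOn
  set B := w0.im with hBdef
  have hB : 0 < B := hWim _ hw0W
  set C := w1.im with hCdef
  have hC : 0 < C := hWim _ hw1W
  set k : ℝ := 2 * s.re with hkdef
  have hk2 : 2 < k := by rw [hkdef]; linarith
  have hk0 : 0 ≤ k := by linarith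
  set r₀ : ℝ := EisensteinSeries.r ⟨⟨A, B⟩, hB⟩ with hr₀def
  have hr₀ : 0 < r₀ := EisensteinSeries.r_pos _
  set c : {p : ℤ × ℤ // Int.gcd p.1 p.2 = 1} → ℝ :=
    fun p => (C ^ s.re * r₀ ^ (-k)) * ‖![p.1.1, p.1.2]‖ ^ (-k) with hcdef
  have hcnn : ∀ p, 0 ≤ c p := by
    intro p
    have : (0:ℝ) ≤ ‖![p.1.1, p.1.2]‖ ^ (-k) := Real.rpow_nonneg (norm_nonneg _) _
    have h1 : (0:ℝ) ≤ C ^ s.re := Real.rpow_nonneg hC.le _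
    have h2 : (0:ℝ) ≤ r₀ ^ (-k) := Real.rpow_nonneg hr₀.le _
    positivity
  have hcsum : Summable c := by
    have hinj : Function.Injective
        (fun p : {p : ℤ × ℤ // Int.gcd p.1 p.2 = 1} => (![p.1.1, p.1.2] : Fin 2 → ℤ)) := by
      rintro ⟨⟨m, n⟩, hp⟩ ⟨⟨m', n'⟩, hp'⟩ hmn
      have h0 := congrFun hmn 0
      have h1 := congrFun hmn 1
      simp only [Matrix.cons_val_zero, Matrix.cons_val_one, Matrix.head_cons] at h0 h1
      simp_all
    exact ((EisensteinSeries.summable_one_div_norm_rpow hk2).comp_injective hinj).mul_left _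
  -- pointwise bound
  have hbound : ∀ (p : {p : ℤ × ℤ // Int.gcd p.1 p.2 = 1}) x,
      ‖h x * eisTerm s (Φ x) ↑p‖ ≤ ‖h x‖ * c p := by
    rintro ⟨⟨m, n⟩, hp⟩ x
    by_cases hx : h x = 0
    · simp only [hx, norm_zero, zero_mul, norm_mul]
      simp
    · have hxK : x ∈ K := Or.inl (subset_tsupport h (by exact hx))
      have hwW : Φ x ∈ W := Set.mem_image_of_mem _ hxK
      rw [norm_mul]
      refine mul_le_mul_of_nonneg_left ?_ (norm_nonneg _)
      have hD := int_denom_ne_zero hp (hΦim x)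
      have hu : 0 < ‖(m : ℂ) * Φ x + (n : ℂ)‖ := norm_pos_iff.mpr hD
      have hnorm : ‖eisTerm s (Φ x) (m, n)‖ =
          (Φ x).im ^ s.re * ‖(m : ℂ) * Φ x + (n : ℂ)‖ ^ (-k) := by
        rw [eisTerm, norm_div, Complex.norm_cpow_eq_rpow_re_of_pos (hΦim x),
          Complex.norm_cpow_eq_rpow_re_of_pos hu]
        have : (2 * s).re = k := by simp [hkdef, Complex.mul_re]
        rw [this, Real.rpow_neg hu.le, div_eq_mul_inv]
      rw [hnorm]
      have h1 : (Φ x).im ^ s.re ≤ C ^ s.re :=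
        Real.rpow_le_rpow (hΦim x).le (hw1max hwW) (by linarith)
      have h2 : ‖(m : ℂ) * Φ x + (n : ℂ)‖ ^ (-k) ≤
          r₀ ^ (-k) * ‖![m, n]‖ ^ (-k) := by
        have hmem : (⟨Φ x, hΦim x⟩ : UpperHalfPlane) ∈ UpperHalfPlane.verticalStrip A B := by
          constructor
          · have := hA _ hwW
            simpa [Real.norm_eq_abs] using this
          · exact hw0min hwW
        have := EisensteinSeries.summand_bound_of_mem_verticalStrip
          (z := ⟨Φ x, hΦim x⟩) hk0 ![m, n] hB hmem
        simpa [Matrix.cons_val_zero, Matrix.cons_val_one, Matrix.head_cons] using this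
      calc (Φ x).im ^ s.re * ‖(m : ℂ) * Φ x + (n : ℂ)‖ ^ (-k)
          ≤ C ^ s.re * (r₀ ^ (-k) * ‖![m, n]‖ ^ (-k)) := by
            apply mul_le_mul h1 h2 (Real.rpow_nonneg hu.le _) (Real.rpow_nonneg hC.le _)
        _ = c ⟨(m, n), hp⟩ := by rw [hcdef]; ring
  -- finiteness of the sum of lintegrals
  have hint : Integrable h μG := hcont.integrable_of_hasCompactSupport hsupp
  have hL : ∫⁻ x, ‖h x‖₊ ∂μG ≠ ⊤ := hint.2.ne
  have hfin : ∑' p : {p : ℤ × ℤ // Int.gcd p.1 p.2 = 1},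
      ∫⁻ x, ‖h x * eisTerm s (Φ x) ↑p‖₊ ∂μG ≠ ⊤ := by
    have hle : ∀ p : {p : ℤ × ℤ // Int.gcd p.1 p.2 = 1},
        ∫⁻ x, ‖h x * eisTerm s (Φ x) ↑p‖₊ ∂μG ≤
          ENNReal.ofReal (c p) * ∫⁻ x, ‖h x‖₊ ∂μG := by
      intro p
      rw [← lintegral_const_mul' _ _ ENNReal.ofReal_ne_top]
      refine lintegral_mono fun x => ?_
      calc (‖h x * eisTerm s (Φ x) ↑p‖₊ : ℝ≥0∞)
          = ENNReal.ofReal ‖h x * eisTerm s (Φ x) ↑p‖ := (ofReal_norm _).symm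
        _ ≤ ENNReal.ofReal (‖h x‖ * c p) := ENNReal.ofReal_le_ofReal (hbound p x)
        _ = ENNReal.ofReal (c p) * ‖h x‖₊ := by
            rw [ENNReal.ofReal_mul (norm_nonneg _), ofReal_norm, mul_comm, enorm_eq_nnnorm]
    refine ne_top_of_le_ne_top ?_ (ENNReal.tsum_le_tsum hle)
    rw [ENNReal.tsum_mul_right]
    apply ENNReal.mul_ne_top _ hL
    rw [← ENNReal.ofReal_tsum_of_nonneg hcnn hcsum]
    exact ENNReal.ofReal_ne_top
  -- interchange sum and integral
  calc ∫ x, h x * eis s (Φ x) ∂μG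
      = ∫ x, ∑' p : {p : ℤ × ℤ // Int.gcd p.1 p.2 = 1}, h x * eisTerm s (Φ x) ↑p ∂μG := by
        congr 1; funext x
        simp only [eis]
        exact (tsum_mul_left).symm
    _ = ∑' p : {p : ℤ × ℤ // Int.gcd p.1 p.2 = 1}, ∫ x, h x * eisTerm s (Φ x) ↑p ∂μG :=
        integral_tsum (fun p => (htermcont p).aestronglyMeasurable) hfin
    _ = ∑' p : {p : ℤ × ℤ // Int.gcd p.1 p.2 = 1},
          hhat * eisTerm s (moebiusM (g : Matrix (Fin 2) (Fin 2) ℝ) Complex.I) ↑p :=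
        tsum_congr hterm_int
    _ = hhat * eis s (moebiusM (g : Matrix (Fin 2) (Fin 2) ℝ) Complex.I) := by
        simp only [eis]
        exact tsum_mul_left
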